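/- Let (R,M) be a discrete valuation domain with finite residue field, quotient field K, and let F ∈ Int(R) be a nonzero nonunit. Then F is absolutely irreducible in Int(R) if and only if every G ∈ Int(R) satisfying both (a) for every a ∈ R, G(a) ∈ M implies F(a) ∈ M, and (b) every monic irreducible polynomial q ∈ K[x] dividing G in K[x] also divides F in K[x], is associated in Int(R) to a power of F. -/

import Mathlib

open Polynomial

section Defs

variable (R K : Type*)

/-- `Int(R) = {F ∈ K[x] ∣ F(R) ⊆ R}`, the ring of integer-valued polynomials,
as a subring of `K[x]`. -/
def intPoly [CommRing R] [CommRing K] [Algebra R K] : Subring (Polynomial K) where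
  carrier := {F | ∀ r : R, ∃ a : R, F.eval (algebraMap R K r) = algebraMap R K a}
  mul_mem' := by
    rintro f g hf hg r
    obtain ⟨a, ha⟩ := hf r
    obtain ⟨b, hb⟩ := hg r
    exact ⟨a * b, by simp [ha, hb]⟩
  one_mem' := fun r => ⟨1, by simp⟩
  add_mem' := by
    rintro f g hf hg r
    obtain ⟨a, ha⟩ := hf r
    obtain ⟨b, hb⟩ := hg r
    exact ⟨a + b, by simp [ha, hb]⟩
  zero_mem' := fun r => ⟨0, by simp⟩
  neg_mem' := by
    rintro f hf r
    obtain ⟨a, ha⟩ := hf r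
    exact ⟨-a, by simp [ha]⟩

/-- Polynomials with coefficients in `R` are integer-valued. -/
theorem map_mem_intPoly [CommRing R] [CommRing K] [Algebra R K] (f : Polynomial R) :
    f.map (algebraMap R K) ∈ intPoly R K :=
  fun r => ⟨f.eval r, by rw [Polynomial.eval_map, Polynomial.eval₂_at_apply]⟩

/-- An element `d` of a commutative monoid is absolutely irreducible if it is irreducible
and, for every `n ≥ 1`, the only factorization of `d ^ n` into irreducibles is, up to order
and unit factors, `d ⋯ d` (`n` copies). -/
def AbsolutelyIrreducible {α : Type*} [CommMonoid α] (d : α) : Prop :=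
  Irreducible d ∧ ∀ n : ℕ, 1 ≤ n → ∀ l : Multiset α, (∀ a ∈ l, Irreducible a) →
    l.prod = d ^ n → Multiset.card l = n ∧ ∀ a ∈ l, Associated a d

/-- The fixed divisor of a polynomial `f ∈ R[x]`: the ideal of `R` generated by the
values of `f` on `R`. -/
def fixDiv [CommRing R] (f : Polynomial R) : Ideal R :=
  Ideal.span (Set.range fun a => f.eval a)

/-- The fixed divisor of an integer-valued polynomial `F ∈ Int(R)`: the ideal of `R`
generated by (the elements of `R` representing) the values of `F` on `R`. -/
def fixDivK [CommRing R] [CommRing K] [Algebra R K] (F : Polynomial K) : Ideal R :=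
  Ideal.span {a : R | ∃ r : R, F.eval (algebraMap R K r) = algebraMap R K a}

/-- The (normalized additive) valuation of a nonzero element of a discrete valuation
ring: the largest `n` such that `x ∈ M ^ n`, where `M` is the maximal ideal. -/
noncomputable def mval [CommRing R] [IsLocalRing R] (x : R) : ℕ :=
  sSup {n : ℕ | x ∈ IsLocalRing.maximalIdeal R ^ n}

open scoped Classical in
/-- The valuation `v : R → ℕ∞`, with `v 0 = ⊤`. -/
noncomputable def vR [CommRing R] [IsLocalRing R] (x : R) : ℕ∞ :=
  if x = 0 then ⊤ else (mval R x : ℕ∞)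

open scoped Classical in
/-- The valuation extended to the quotient field `K`, with `v 0 = ⊤`. -/
noncomputable def vK [CommRing R] [IsLocalRing R] [CommRing K] [Algebra R K]
    [IsLocalization (nonZeroDivisors R) K] (x : K) : WithTop ℤ :=
  if x = 0 then ⊤
  else (((mval R (IsLocalization.sec (nonZeroDivisors R) x).1 : ℤ) -
        (mval R ((IsLocalization.sec (nonZeroDivisors R) x).2 : R) : ℤ) : ℤ) : WithTop ℤ)

/-- The residue class `s + M ^ n` of `s` modulo the `n`-th power of the maximal ideal. -/
def resClass [CommRing R] [IsLocalRing R] (s : R) (n : ℕ) : Set R :=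
  {x | x - s ∈ IsLocalRing.maximalIdeal R ^ n}

/-- A finite set `S ⊆ R` is balanced if, letting `n s` for each `s ∈ S` be the minimal
non-negative integer with `(s + M ^ (n s)) ∩ S = {s}`, the residue classes `s + M ^ (n s)`
(`s ∈ S`) are pairwise disjoint and cover `R`. -/
def IsBalanced [CommRing R] [IsLocalRing R] (S : Finset R) : Prop :=
  S.Nonempty ∧
  ∃ n : R → ℕ,
    (∀ s ∈ S, resClass R s (n s) ∩ (S : Set R) = {s} ∧
      ∀ k : ℕ, resClass R s k ∩ (S : Set R) = {s} → n s ≤ k) ∧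
    (∀ s ∈ S, ∀ t ∈ S, s ≠ t → Disjoint (resClass R s (n s)) (resClass R t (n t))) ∧
    (⋃ s ∈ S, resClass R s (n s)) = Set.univ

/-- `ρ` describes the `M`-adic partition `C_S` associated to `S`: the partition of `R`
into the residue classes `s + M ^ (ρ s)`, `s ∈ S`, such that each block contains both a
residue class of `M ^ (ρ s + 1)` intersecting `S` and one disjoint from `S`. -/
def IsSPartition [CommRing R] [IsLocalRing R] (S : Finset R) (ρ : R → ℕ) : Prop :=
  (⋃ s ∈ S, resClass R s (ρ s)) = Set.univ ∧
  (∀ s ∈ S, ∀ t ∈ S,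
    resClass R s (ρ s) = resClass R t (ρ t) ∨
      Disjoint (resClass R s (ρ s)) (resClass R t (ρ t))) ∧
  (∀ s ∈ S,
    (∃ u : R, resClass R u (ρ s + 1) ⊆ resClass R s (ρ s) ∧
      (resClass R u (ρ s + 1) ∩ (S : Set R)).Nonempty) ∧
    (∃ u : R, resClass R u (ρ s + 1) ⊆ resClass R s (ρ s) ∧
      resClass R u (ρ s + 1) ∩ (S : Set R) = ∅))

/-- `S'` is a balanced set associated to `S` (relative to the partition data `ρ` of `C_S`):
`S' ⊆ S` is balanced, consists of one representative per block of `C_S`, and its associated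
partition `C_{S'}` coincides with `C_S`. -/
def IsAssociatedBalancedSubset [CommRing R] [IsLocalRing R] (S S' : Finset R) (ρ : R → ℕ) :
    Prop :=
  S' ⊆ S ∧ IsBalanced R S' ∧
  (∀ s ∈ S', ∀ t ∈ S', s ≠ t → Disjoint (resClass R s (ρ s)) (resClass R t (ρ t))) ∧
  (⋃ s ∈ S', resClass R s (ρ s)) = Set.univ

open scoped Classical in
/-- The partition matrix of the partition `{s + M ^ (ρ s) : s ∈ S}`: diagonal entries
`ρ s`, off-diagonal entries `v (s - t)`. -/
noncomputable def partitionMatrix [CommRing R] [IsLocalRing R] (S : Finset R) (ρ : R → ℕ) :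
    Matrix {x // x ∈ S} {x // x ∈ S} ℤ :=
  Matrix.of fun s t =>
    if (s : R) = (t : R) then (ρ (s : R) : ℤ) else (mval R ((s : R) - (t : R)) : ℤ)

/-- `m` is the vector of multiplicities of the equalizing polynomial of `S`: the unique
vector of positive integers with gcd `1` such that `A · m = e · (1, …, 1)ᵀ` for some
non-negative integer `e`, where `A` is the partition matrix. -/
def IsEqualizingVector [CommRing R] [IsLocalRing R] (S : Finset R) (ρ : R → ℕ) (m : R → ℕ) :
    Prop :=
  (∀ s ∈ S, 0 < m s) ∧ S.gcd m = 1 ∧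
  ∃ e : ℕ, ∀ s : {x // x ∈ S},
    (∑ t : {x // x ∈ S}, partitionMatrix R S ρ s t * (m (t : R) : ℤ)) = (e : ℤ)

/-- `f` is the equalizing polynomial of `S`. -/
def IsEqualizingPoly [CommRing R] [IsLocalRing R] (S : Finset R) (f : Polynomial R) : Prop :=
  ∃ (ρ : R → ℕ) (m : R → ℕ), IsSPartition R S ρ ∧ IsEqualizingVector R S ρ m ∧
    f = ∏ s ∈ S, (Polynomial.X - Polynomial.C s) ^ m s

/-- The posh set of `f ∈ R[x]`: the set of `r ∈ R` where `v (f r)` exceeds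
`min_{t ∈ R} v (f t)`. -/
noncomputable def poshR [CommRing R] [IsLocalRing R] (f : Polynomial R) : Set R :=
  {r : R | (⨅ t : R, vR R (f.eval t)) < vR R (f.eval r)}

/-- The posh set of `F ∈ K[x]`: the set of `r ∈ R` where `v (F r)` exceeds
`min_{t ∈ R} v (F t)`. -/
def poshK [CommRing R] [IsLocalRing R] [CommRing K] [Algebra R K]
    [IsLocalization (nonZeroDivisors R) K] (F : Polynomial K) : Set R :=
  {r : R | ∃ t : R, vK R K (F.eval (algebraMap R K t)) < vK R K (F.eval (algebraMap R K r))}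

/-- `r` lies in an `S`-poor neighborhood of the partition `C_S` (described by `ρ`):
a residue class `r + M ^ (ρ s + 1)` disjoint from `S` inside a block `s + M ^ (ρ s)`. -/
def IsPoorElt [CommRing R] [IsLocalRing R] (S : Finset R) (ρ : R → ℕ) (r : R) : Prop :=
  ∃ s ∈ S, r ∈ resClass R s (ρ s) ∧ resClass R r (ρ s + 1) ∩ (S : Set R) = ∅

/-- The rich set of `S`: the union of the `S`-rich neighborhoods `s + M ^ (ρ s + 1)`,
`s ∈ S`. -/
def richSet [CommRing R] [IsLocalRing R] (S : Finset R) (ρ : R → ℕ) : Set R :=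
  ⋃ s ∈ S, resClass R s (ρ s + 1)

/-- `a` is an `M`-ordering (`P`-ordering) of `R`. -/
def IsMOrdering [CommRing R] [IsLocalRing R] (a : ℕ → R) : Prop :=
  ∀ k : ℕ, ∀ x : R,
    vR R (∏ i ∈ Finset.range k, (a k - a i)) ≤ vR R (∏ i ∈ Finset.range k, (x - a i))

end Defs


section Aux

set_option linter.unusedSectionVars false

open IsLocalRing

variable {R K : Type*} [CommRing R] [IsDomain R] [IsDiscreteValuationRing R]
  [Field K] [Algebra R K] [IsFractionRing R K]

theorem mem_intPoly_iff {G : Polynomial K} :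
    G ∈ intPoly R K ↔ ∀ r : R, ∃ a : R, G.eval (algebraMap R K r) = algebraMap R K a :=
  Iff.rfl

theorem ivp_inj : Function.Injective (algebraMap R K) :=
  IsFractionRing.injective R K

/-- The value of `G ∈ Int(R)` at `a ∈ R`, as an element of `R`. -/
noncomputable def evIP (G : intPoly R K) (a : R) : R :=
  Classical.choose (mem_intPoly_iff.mp G.2 a)

theorem evIP_spec (G : intPoly R K) (a : R) :
    (G : Polynomial K).eval (algebraMap R K a) = algebraMap R K (evIP G a) :=
  Classical.choose_spec (mem_intPoly_iff.mp G.2 a)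

theorem evIP_unique {G : intPoly R K} {a g : R}
    (h : (G : Polynomial K).eval (algebraMap R K a) = algebraMap R K g) :
    g = evIP G a :=
  IsFractionRing.injective R K (h ▸ evIP_spec G a)

theorem evIP_mul (G H : intPoly R K) (a : R) :
    evIP (G * H) a = evIP G a * evIP H a := by
  apply IsFractionRing.injective R K
  rw [← evIP_spec, map_mul, ← evIP_spec, ← evIP_spec]
  push_cast
  rw [Polynomial.eval_mul]

theorem constIP_mem (r : R) : (Polynomial.C (algebraMap R K r)) ∈ intPoly R K :=
  mem_intPoly_iff.mpr fun _ => ⟨r, by simp⟩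

theorem isUnit_of_coe_eq_C {G : intPoly R K} {r : R}
    (h : (G : Polynomial K) = Polynomial.C (algebraMap R K r)) (hr : IsUnit r) :
    IsUnit G := by
  obtain ⟨u, rfl⟩ := hr
  refine IsUnit.of_mul_eq_one ⟨Polynomial.C (algebraMap R K ((u⁻¹ : Rˣ) : R)),
    constIP_mem _⟩ ?_
  apply Subtype.ext
  push_cast
  rw [h, ← Polynomial.C_mul, ← map_mul]
  simp

theorem coe_eq_C_evIP {G : intPoly R K} (h : (G : Polynomial K).natDegree = 0) :
    (G : Polynomial K) = Polynomial.C (algebraMap R K (evIP G 0)) := by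
  have h1 := evIP_spec G 0
  rw [Polynomial.eq_C_of_natDegree_eq_zero h] at h1 ⊢
  rw [Polynomial.eval_C] at h1
  rw [h1]

theorem evIP_const {G : intPoly R K} (h : (G : Polynomial K).natDegree = 0) (a : R) :
    evIP G a = evIP G 0 := by
  apply IsFractionRing.injective R K
  rw [← evIP_spec]
  rw [coe_eq_C_evIP h, Polynomial.eval_C]

theorem evIP_mem_maximalIdeal {G : intPoly R K} (h : (G : Polynomial K).natDegree = 0)
    (hu : ¬IsUnit G) (a : R) : evIP G a ∈ maximalIdeal R := by
  rw [evIP_const h]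
  rw [mem_maximalIdeal, mem_nonunits_iff]
  intro hunit
  exact hu (isUnit_of_coe_eq_C (coe_eq_C_evIP h) hunit)

theorem exists_not_mem_pow {r : R} (hr : r ≠ 0) : ∃ N : ℕ, r ∉ maximalIdeal R ^ N := by
  obtain ⟨π, hπ⟩ := IsDiscreteValuationRing.exists_irreducible R
  obtain ⟨n, hassoc⟩ := IsDiscreteValuationRing.associated_pow_irreducible hr hπ
  refine ⟨n + 1, fun hmem => ?_⟩
  rw [hπ.maximalIdeal_eq, Ideal.span_singleton_pow, Ideal.mem_span_singleton] at hmem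
  have h1 : π ^ (n + 1) ∣ π ^ n := hmem.trans hassoc.dvd
  have h2 : (n + 1 : ℕ) ≤ n := (pow_dvd_pow_iff hπ.ne_zero hπ.not_isUnit).mp h1
  omega

theorem exists_pow_dvd {c : R} (hc : c ≠ 0) :
    ∃ N : ℕ, ∀ x ∈ maximalIdeal R ^ N, c ∣ x := by
  obtain ⟨π, hπ⟩ := IsDiscreteValuationRing.exists_irreducible R
  obtain ⟨n, hassoc⟩ := IsDiscreteValuationRing.associated_pow_irreducible hc hπ
  refine ⟨n, fun x hx => ?_⟩
  rw [hπ.maximalIdeal_eq, Ideal.span_singleton_pow, Ideal.mem_span_singleton] at hx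
  exact (Associated.dvd hassoc).trans hx

theorem infiniteR : Infinite R := by
  rw [← not_finite_iff_infinite]
  intro h
  exact IsDiscreteValuationRing.not_isField R (Finite.isField_of_domain R)

theorem exists_evIP_ne_zero {G : intPoly R K} (hG : (G : Polynomial K) ≠ 0) :
    ∃ a : R, evIP G a ≠ 0 := by
  have : Infinite R := infiniteR
  by_contra h
  push_neg at h
  apply hG
  apply Polynomial.eq_zero_of_infinite_isRoot
  apply Set.Infinite.mono (s := Set.range (algebraMap R K))
  · rintro x ⟨a, rfl⟩
    show (G : Polynomial K).eval _ = 0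
    rw [evIP_spec G a, h a, map_zero]
  · exact Set.infinite_range_of_injective (IsFractionRing.injective R K)

/-- The "fixed divisor valuation": largest `n` with all values of `G` in `M ^ n`. -/
noncomputable def dvalIP (G : intPoly R K) : ℕ :=
  sSup {n : ℕ | ∀ a : R, evIP G a ∈ maximalIdeal R ^ n}

theorem dvalIP_set_nonempty (G : intPoly R K) :
    {n : ℕ | ∀ a : R, evIP G a ∈ maximalIdeal R ^ n}.Nonempty :=
  ⟨0, fun _ => by simp⟩

theorem dvalIP_bddAbove {G : intPoly R K} (hG : (G : Polynomial K) ≠ 0) :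
    BddAbove {n : ℕ | ∀ a : R, evIP G a ∈ maximalIdeal R ^ n} := by
  obtain ⟨a, ha⟩ := exists_evIP_ne_zero hG
  obtain ⟨N, hN⟩ := exists_not_mem_pow ha
  refine ⟨N, fun n hn => ?_⟩
  by_contra hlt
  exact hN (Ideal.pow_le_pow_right (le_of_not_ge hlt) (hn a))

theorem dvalIP_spec {G : intPoly R K} (hG : (G : Polynomial K) ≠ 0) (a : R) :
    evIP G a ∈ maximalIdeal R ^ dvalIP G :=
  Nat.sSup_mem (dvalIP_set_nonempty G) (dvalIP_bddAbove hG) a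

theorem le_dvalIP {G : intPoly R K} (hG : (G : Polynomial K) ≠ 0) {n : ℕ}
    (h : ∀ a : R, evIP G a ∈ maximalIdeal R ^ n) : n ≤ dvalIP G :=
  le_csSup (dvalIP_bddAbove hG) h

theorem dvalIP_mul_ge {G H : intPoly R K} (hG : (G : Polynomial K) ≠ 0)
    (hH : (H : Polynomial K) ≠ 0) : dvalIP G + dvalIP H ≤ dvalIP (G * H) := by
  have hGH : ((G * H : intPoly R K) : Polynomial K) ≠ 0 := by
    push_cast
    exact mul_ne_zero hG hH
  apply le_dvalIP hGH
  intro a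
  rw [evIP_mul, pow_add]
  exact Ideal.mul_mem_mul (dvalIP_spec hG a) (dvalIP_spec hH a)

/-- A superadditive weight on `Int(R)`. -/
noncomputable def wIP (G : intPoly R K) : ℕ := (G : Polynomial K).natDegree + dvalIP G

theorem one_le_wIP {G : intPoly R K} (hG : (G : Polynomial K) ≠ 0) (hu : ¬IsUnit G) :
    1 ≤ wIP G := by
  rcases Nat.eq_zero_or_pos (G : Polynomial K).natDegree with h | h
  · have h1 : 1 ≤ dvalIP G := by
      apply le_dvalIP hG
      intro a
      rw [pow_one]
      exact evIP_mem_maximalIdeal h hu a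
    exact le_add_of_nonneg_of_le (Nat.zero_le _) h1
  · exact le_add_of_le_of_nonneg h (Nat.zero_le _)

theorem wIP_mul_ge {G H : intPoly R K} (hG : (G : Polynomial K) ≠ 0)
    (hH : (H : Polynomial K) ≠ 0) : wIP G + wIP H ≤ wIP (G * H) := by
  have hdeg : ((G * H : intPoly R K) : Polynomial K).natDegree =
      (G : Polynomial K).natDegree + (H : Polynomial K).natDegree := by
    push_cast
    exact Polynomial.natDegree_mul hG hH
  have := dvalIP_mul_ge hG hH
  unfold wIP
  omega

theorem coe_ne_zero {G : intPoly R K} (h : G ≠ 0) : (G : Polynomial K) ≠ 0 := by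
  simpa using h

theorem exists_factors_aux :
    ∀ (w : ℕ) (G : intPoly R K), wIP G ≤ w → G ≠ 0 → ¬IsUnit G →
      ∃ l : Multiset (intPoly R K), (∀ a ∈ l, Irreducible a) ∧ l.prod = G := by
  intro w
  induction w with
  | zero =>
    intro G hw h0 hu
    have := one_le_wIP (coe_ne_zero h0) hu
    omega
  | succ w ih =>
    intro G hw h0 hu
    by_cases hirr : Irreducible G
    · exact ⟨{G}, by simpa using hirr, by simp⟩
    · rw [irreducible_iff] at hirr
      push_neg at hirr
      obtain ⟨a, b, hab, ha, hb⟩ := hirr hu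
      have ha0 : a ≠ 0 := by rintro rfl; exact h0 (by rw [hab, zero_mul])
      have hb0 : b ≠ 0 := by rintro rfl; exact h0 (by rw [hab, mul_zero])
      have hsup := wIP_mul_ge (coe_ne_zero ha0) (coe_ne_zero hb0)
      rw [← hab] at hsup
      have h1a := one_le_wIP (coe_ne_zero ha0) ha
      have h1b := one_le_wIP (coe_ne_zero hb0) hb
      obtain ⟨la, hla, hlap⟩ := ih a (by omega) ha0 ha
      obtain ⟨lb, hlb, hlbp⟩ := ih b (by omega) hb0 hb
      refine ⟨la + lb, ?_, ?_⟩
      · intro x hx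
        rcases Multiset.mem_add.mp hx with h | h
        · exact hla x h
        · exact hlb x h
      · rw [Multiset.prod_add, hlap, hlbp, hab]

theorem exists_factors_IP (G : intPoly R K) (h0 : G ≠ 0) (hu : ¬IsUnit G) :
    ∃ l : Multiset (intPoly R K), (∀ a ∈ l, Irreducible a) ∧ l.prod = G :=
  exists_factors_aux (wIP G) G le_rfl h0 hu

theorem assoc_pow_cancel {α : Type*} [CommMonoidWithZero α] [IsCancelMulZero α] {F : α} (h0 : F ≠ 0)
    (hu : ¬IsUnit F) : ∀ {c n : ℕ}, Associated (F ^ c) (F ^ n) → c = n := by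
  have key : ∀ c n : ℕ, c ≤ n → Associated (F ^ c) (F ^ n) → c = n := by
    intro c n hcn h
    obtain ⟨u, hueq⟩ := h
    have h1 : F ^ c * (u : α) = F ^ c * F ^ (n - c) := by
      rw [hueq, ← pow_add, Nat.add_sub_cancel' hcn]
    have h2 : (u : α) = F ^ (n - c) := mul_left_cancel₀ (pow_ne_zero _ h0) h1
    rcases Nat.eq_zero_or_pos (n - c) with h3 | h3
    · omega
    · exact absurd ((isUnit_pow_iff (by omega)).mp (h2 ▸ u.isUnit)) hu
  intro c n h
  rcases le_total c n with hcn | hnc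
  · exact key c n hcn h
  · exact (key n c hnc h.symm).symm

theorem prod_assoc_pow {α : Type*} [CommMonoid α] {F : α} {l : Multiset α}
    (h : ∀ a ∈ l, Associated a F) : Associated l.prod (F ^ Multiset.card l) := by
  induction l using Multiset.induction with
  | empty => simp
  | cons a t ih =>
    simp only [Multiset.prod_cons, Multiset.card_cons, pow_succ']
    exact (h a (Multiset.mem_cons_self a t)).mul_mul
      (ih fun x hx => h x (Multiset.mem_cons_of_mem hx))

/-- If every monic irreducible dividing `G` divides `F`, then `G ∣ F ^ (deg G + 1)`
in `K[x]`. -/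
theorem dvd_pow_of_forall_irred {F : Polynomial K} :
    ∀ (d : ℕ) (G : Polynomial K), G ≠ 0 → G.natDegree ≤ d →
      (∀ q : Polynomial K, q.Monic → Irreducible q → q ∣ G → q ∣ F) → G ∣ F ^ (d + 1) := by
  intro d
  induction d with
  | zero =>
    intro G hG0 hdeg _
    have : IsUnit G := by
      rw [Polynomial.eq_C_of_natDegree_eq_zero (Nat.le_zero.mp hdeg)]
      exact Polynomial.isUnit_C.mpr (isUnit_iff_ne_zero.mpr (fun h => hG0 (by
        rw [Polynomial.eq_C_of_natDegree_eq_zero (Nat.le_zero.mp hdeg), h, map_zero])))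
    exact this.dvd
  | succ d ih =>
    intro G hG0 hdeg hB
    by_cases hGu : IsUnit G
    · exact hGu.dvd
    obtain ⟨q', hq'irr, hq'dvd⟩ := WfDvdMonoid.exists_irreducible_factor hGu hG0
    have hq'0 : q' ≠ 0 := hq'irr.ne_zero
    set q : Polynomial K := q' * Polynomial.C q'.leadingCoeff⁻¹ with hq
    have hqmonic : q.Monic := Polynomial.monic_mul_leadingCoeff_inv hq'0
    have hassoc : Associated q' q :=
      ⟨(Polynomial.isUnit_C.mpr (isUnit_iff_ne_zero.mpr
        (inv_ne_zero (Polynomial.leadingCoeff_ne_zero.mpr hq'0)))).unit, rfl⟩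
    have hqirr : Irreducible q := hassoc.irreducible hq'irr
    have hqdvdG : q ∣ G := hassoc.symm.dvd.trans hq'dvd
    have hqF : q ∣ F := hB q hqmonic hqirr hqdvdG
    obtain ⟨G', rfl⟩ := hqdvdG
    have hG'0 : G' ≠ 0 := fun h => hG0 (by rw [h, mul_zero])
    have hq0 : q ≠ 0 := hqirr.ne_zero
    have hqdeg : 1 ≤ q.natDegree := hqirr.natDegree_pos
    have hdegs : (q * G').natDegree = q.natDegree + G'.natDegree :=
      Polynomial.natDegree_mul hq0 hG'0
    have hG'deg : G'.natDegree ≤ d := by omega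
    have hG'dvd : G' ∣ F ^ (d + 1) :=
      ih G' hG'0 hG'deg (fun r hrm hri hrd => hB r hrm hri (hrd.mul_left q))
    calc q * G' ∣ F * F ^ (d + 1) := mul_dvd_mul hqF hG'dvd
      _ = F ^ (d + 2) := by rw [← pow_succ']

/-- Key step of the hard direction: conditions (a) and (b) force `G` to divide a
power of `F` in `Int(R)`. -/
theorem exists_pow_factor {F : Polynomial K} (hF : F ∈ intPoly R K) (hF0 : F ≠ 0)
    {G : Polynomial K} (hG : G ∈ intPoly R K) (hG0 : G ≠ 0)
    (hA : ∀ a : R, evIP (⟨G, hG⟩ : intPoly R K) a ∈ maximalIdeal R →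
      evIP (⟨F, hF⟩ : intPoly R K) a ∈ maximalIdeal R)
    (hB : ∀ q : Polynomial K, q.Monic → Irreducible q → q ∣ G → q ∣ F) :
    ∃ n : ℕ, 1 ≤ n ∧ ∃ H : intPoly R K,
      (⟨F, hF⟩ : intPoly R K) ^ n = (⟨G, hG⟩ : intPoly R K) * H := by
  set m : ℕ := G.natDegree + 1 with hm
  obtain ⟨H₀, hH₀⟩ : G ∣ F ^ m := dvd_pow_of_forall_irred G.natDegree G hG0 le_rfl hB
  -- clear denominators of H₀
  obtain ⟨b, hb⟩ := IsLocalization.integerNormalization_map_to_map (nonZeroDivisors R) H₀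
  set h₀ : Polynomial R := IsLocalization.integerNormalization (nonZeroDivisors R) H₀
    with hh₀
  set c : R := (b : R) with hcdef
  have hc : c ≠ 0 := nonZeroDivisors.ne_zero b.2
  obtain ⟨N, hN⟩ := exists_pow_dvd hc
  refine ⟨m + N, by omega, ?_⟩
  -- the membership proof for F ^ N * H₀
  have hmem : (F ^ N * H₀) ∈ intPoly R K := by
    rw [mem_intPoly_iff]
    intro a
    set α : K := algebraMap R K a with hα
    set fa : R := evIP (⟨F, hF⟩ : intPoly R K) a with hfa
    set ga : R := evIP (⟨G, hG⟩ : intPoly R K) a with hga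
    have hFa : F.eval α = algebraMap R K fa := by
      rw [hα, hfa]; exact evIP_spec (⟨F, hF⟩ : intPoly R K) a
    have hGa : G.eval α = algebraMap R K ga := by
      rw [hα, hga]; exact evIP_spec (⟨G, hG⟩ : intPoly R K) a
    have hE1 : algebraMap R K c * H₀.eval α = algebraMap R K (h₀.eval a) := by
      have := congrArg (Polynomial.eval α) hb
      rw [Polynomial.eval_map, Polynomial.eval₂_at_apply, Polynomial.eval_smul,
        Algebra.smul_def] at this
      exact this.symm
    have hE2 : algebraMap R K (fa ^ m) = algebraMap R K ga * H₀.eval α := by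
      rw [map_pow, ← hFa, ← hGa, ← Polynomial.eval_pow, ← Polynomial.eval_mul, ← hH₀]
    have hdvd : c ∣ fa ^ N * h₀.eval a := by
      by_cases hfaM : fa ∈ maximalIdeal R
      · exact ((hN _ (Ideal.pow_mem_pow hfaM N))).mul_right _
      · have hgaU : IsUnit ga := by
          by_contra hgau
          exact hfaM (hA a ((mem_maximalIdeal _).mpr (mem_nonunits_iff.mpr hgau)))
        have heq : ga * h₀.eval a = c * fa ^ m := by
          apply IsFractionRing.injective R K
          rw [map_mul, map_mul, ← hE1, hE2]
          ring
        have : c ∣ ga * h₀.eval a := ⟨fa ^ m, heq⟩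
        exact ((hgaU.dvd_mul_left).mp this).mul_left _
    obtain ⟨r, hr⟩ := hdvd
    refine ⟨r, ?_⟩
    have hcK : algebraMap R K c ≠ 0 := fun h =>
      hc (IsFractionRing.injective R K (h.trans (map_zero _).symm))
    apply mul_left_cancel₀ hcK
    rw [Polynomial.eval_mul, Polynomial.eval_pow, hFa, ← map_pow]
    calc algebraMap R K c * (algebraMap R K (fa ^ N) * H₀.eval α)
        = algebraMap R K (fa ^ N) * (algebraMap R K c * H₀.eval α) := by ring
      _ = algebraMap R K (fa ^ N * h₀.eval a) := by rw [hE1, ← map_mul]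
      _ = algebraMap R K (c * r) := by rw [hr]
      _ = algebraMap R K c * algebraMap R K r := by rw [map_mul]
  refine ⟨⟨F ^ N * H₀, hmem⟩, ?_⟩
  apply Subtype.ext
  push_cast
  rw [pow_add, hH₀]
  ring

end Aux

/-- A nonzero nonunit `F ∈ Int(R)` is absolutely irreducible iff every
`G ∈ Int(R)` such that (a) `G(a) ∈ M` implies `F(a) ∈ M` for all `a ∈ R`, and (b) every
monic irreducible `q ∈ K[x]` dividing `G` also divides `F`, is associated in `Int(R)` to a
power of `F`. -/
theorem statement8 (R K : Type*) [CommRing R] [IsDomain R] [IsDiscreteValuationRing R]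
    [Finite (IsLocalRing.ResidueField R)]
    [Field K] [Algebra R K] [IsFractionRing R K]
    (F : Polynomial K) (hF : F ∈ intPoly R K)
    (hF0 : F ≠ 0) (hFu : ¬IsUnit (⟨F, hF⟩ : intPoly R K)) :
    AbsolutelyIrreducible (⟨F, hF⟩ : intPoly R K) ↔
      ∀ (G : Polynomial K) (hG : G ∈ intPoly R K),
        (∀ a : R,
          (∃ g ∈ IsLocalRing.maximalIdeal R, G.eval (algebraMap R K a) = algebraMap R K g) →
          (∃ g ∈ IsLocalRing.maximalIdeal R, F.eval (algebraMap R K a) = algebraMap R K g)) →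
        (∀ q : Polynomial K, q.Monic → Irreducible q → q ∣ G → q ∣ F) →
        ∃ n : ℕ, Associated (⟨G, hG⟩ : intPoly R K) ((⟨F, hF⟩ : intPoly R K) ^ n) := by
  classical
  set Ft : intPoly R K := ⟨F, hF⟩ with hFt
  have hFt0 : Ft ≠ 0 := fun h => hF0 (congrArg Subtype.val h)
  constructor
  · -- absolutely irreducible → every such G is associated to a power of F
    intro habs G hG ha hb
    set Gt : intPoly R K := ⟨G, hG⟩ with hGt
    have hG0 : G ≠ 0 := by
      rintro rfl
      have hinfR : Infinite R := infiniteR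
      have hinfK : Infinite K := Infinite.of_injective _ (IsFractionRing.injective R K)
      obtain ⟨t, ht⟩ : ∃ t : K, F.eval t ≠ 0 := by
        by_contra h
        push_neg at h
        apply hF0
        apply Polynomial.eq_zero_of_infinite_isRoot
        have : {x | F.IsRoot x} = Set.univ := Set.eq_univ_of_forall h
        rw [this]
        exact Set.infinite_univ
      exact ht (Polynomial.dvd_iff_isRoot.mp
        (hb (Polynomial.X - Polynomial.C t) (Polynomial.monic_X_sub_C t)
          (Polynomial.irreducible_X_sub_C t) (dvd_zero _)))
    have hGt0 : Gt ≠ 0 := fun h => hG0 (congrArg Subtype.val h)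
    have hA : ∀ a : R, evIP Gt a ∈ IsLocalRing.maximalIdeal R →
        evIP Ft a ∈ IsLocalRing.maximalIdeal R := by
      intro a hga
      obtain ⟨g, hgM, hgeq⟩ := ha a ⟨evIP Gt a, hga, (evIP_spec Gt a : _)⟩
      have hge : g = evIP Ft a := evIP_unique hgeq
      exact hge ▸ hgM
    obtain ⟨n, hn1, H, heq'⟩ := exists_pow_factor hF hF0 hG hG0 hA hb
    have heq : Ft ^ n = Gt * H := heq'
    by_cases hGu : IsUnit Gt
    · exact ⟨0, by rw [pow_zero]; exact associated_one_iff_isUnit.mpr hGu⟩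
    · have hH0 : H ≠ 0 := by
        rintro rfl
        rw [mul_zero] at heq
        exact hFt0 (pow_eq_zero_iff (by omega) |>.mp heq)
      obtain ⟨lG, hlG, hlGp⟩ := exists_factors_IP Gt hGt0 hGu
      have hlGassoc : ∀ x ∈ lG, Associated x Ft := by
        by_cases hHu : IsUnit H
        · -- absorb the unit H into one factor of lG
          have hlGne : lG ≠ 0 := by
            rintro rfl
            rw [Multiset.prod_zero] at hlGp
            exact hGu (hlGp ▸ isUnit_one)
          obtain ⟨a, halG⟩ := Multiset.exists_mem_of_ne_zero hlGne
          set l : Multiset (intPoly R K) := (a * H) ::ₘ lG.erase a with hl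
          have haH : Associated a (a * H) := ⟨hHu.unit, rfl⟩
          have hlirr : ∀ x ∈ l, Irreducible x := by
            intro x hx
            rcases Multiset.mem_cons.mp hx with h | h
            · exact h ▸ haH.irreducible (hlG a halG)
            · exact hlG x (Multiset.mem_of_mem_erase h)
          have hlprod : l.prod = Ft ^ n := by
            rw [hl, Multiset.prod_cons, mul_comm a H, mul_assoc,
              Multiset.prod_erase halG, hlGp, mul_comm H Gt, ← heq]
          obtain ⟨-, hassoc⟩ := habs.2 n hn1 l hlirr hlprod
          intro x hx
          by_cases hxa : x = a
          · subst hxa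
            exact haH.trans (hassoc (x * H) (Multiset.mem_cons_self _ _))
          · refine hassoc x (Multiset.mem_cons_of_mem ?_)
            exact (Multiset.mem_erase_of_ne hxa).mpr hx
        · obtain ⟨lH, hlH, hlHp⟩ := exists_factors_IP H hH0 hHu
          have hlirr : ∀ x ∈ lG + lH, Irreducible x := by
            intro x hx
            rcases Multiset.mem_add.mp hx with h | h
            · exact hlG x h
            · exact hlH x h
          have hlprod : (lG + lH).prod = Ft ^ n := by
            rw [Multiset.prod_add, hlGp, hlHp, ← heq]
          obtain ⟨-, hassoc⟩ := habs.2 n hn1 (lG + lH) hlirr hlprod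
          intro x hx
          exact hassoc x (Multiset.mem_add.mpr (Or.inl hx))
      refine ⟨Multiset.card lG, ?_⟩
      have := prod_assoc_pow hlGassoc
      rwa [hlGp] at this
  · -- converse
    intro hyp
    have hprime : (IsLocalRing.maximalIdeal R).IsPrime :=
      (IsLocalRing.maximalIdeal.isMaximal R).isPrime
    -- a helper producing the two conditions for any divisor situation
    have key : ∀ x : intPoly R K, (∀ r : R,
          (∃ g ∈ IsLocalRing.maximalIdeal R,
            (x : Polynomial K).eval (algebraMap R K r) = algebraMap R K g) →
          (∃ g ∈ IsLocalRing.maximalIdeal R,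
            F.eval (algebraMap R K r) = algebraMap R K g)) →
        (∀ q : Polynomial K, q.Monic → Irreducible q → q ∣ (x : Polynomial K) → q ∣ F) →
        ∃ k : ℕ, Associated x (Ft ^ k) := by
      intro x hxa hxb
      obtain ⟨k, hk⟩ := hyp x.1 x.2 hxa hxb
      exact ⟨k, hk⟩
    constructor
    · -- irreducibility
      refine ⟨hFu, ?_⟩
      intro a b hab
      have habK : F = (a : Polynomial K) * (b : Polynomial K) := by
        have := congrArg Subtype.val hab
        push_cast at this
        exact this
      have conds : ∀ u v : intPoly R K, Ft = u * v →
          ∃ k : ℕ, Associated u (Ft ^ k) := by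
        intro u v huv
        have huvK : F = (u : Polynomial K) * (v : Polynomial K) := by
          have := congrArg Subtype.val huv
          push_cast at this
          exact this
        refine key u ?_ ?_
        · rintro r ⟨g, hgM, hge⟩
          refine ⟨g * evIP v r, Ideal.mul_mem_right _ _ hgM, ?_⟩
          rw [huvK, Polynomial.eval_mul, hge, evIP_spec v r, ← map_mul]
        · intro q _ _ hq
          exact hq.trans ⟨(v : Polynomial K), huvK⟩
      obtain ⟨k₁, hk₁⟩ := conds a b hab
      obtain ⟨k₂, hk₂⟩ := conds b a (by rw [hab, mul_comm])
      have hFassoc : Associated (Ft ^ 1) (Ft ^ (k₁ + k₂)) := by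
        rw [pow_one, pow_add]
        exact hab ▸ hk₁.mul_mul hk₂
      have h12 : 1 = k₁ + k₂ := assoc_pow_cancel hFt0 hFu hFassoc
      rcases Nat.eq_zero_or_pos k₁ with h | h
      · subst h
        rw [pow_zero] at hk₁
        exact Or.inl (associated_one_iff_isUnit.mp hk₁)
      · have hk₂0 : k₂ = 0 := by omega
        subst hk₂0
        rw [pow_zero] at hk₂
        exact Or.inr (associated_one_iff_isUnit.mp hk₂)
    · -- the multiset condition
      intro n hn l hl hprod
      have hprodK : (l.prod : Polynomial K) = F ^ n := by
        rw [hprod]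
        push_cast
        ring
      have hmem : ∀ x ∈ l, Associated x Ft := by
        intro x hx
        have hxrest : x * (l.erase x).prod = l.prod := Multiset.prod_erase hx
        have hS : (x : Polynomial K) * (((l.erase x).prod : intPoly R K) : Polynomial K)
            = F ^ n := by
          have h2 := congrArg Subtype.val (hxrest.trans hprod)
          simpa only [Subring.coe_mul, SubmonoidClass.coe_pow] using h2
        have hcondA : ∀ r : R,
            (∃ g ∈ IsLocalRing.maximalIdeal R,
              (x : Polynomial K).eval (algebraMap R K r) = algebraMap R K g) →
            (∃ g ∈ IsLocalRing.maximalIdeal R,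
              F.eval (algebraMap R K r) = algebraMap R K g) := by
          rintro r ⟨g, hgM, hge⟩
          refine ⟨evIP Ft r, ?_, (evIP_spec Ft r : _)⟩
          have hFn : (algebraMap R K (evIP Ft r)) ^ n =
              algebraMap R K (g * evIP ((l.erase x).prod) r) := by
            rw [← evIP_spec Ft r, ← Polynomial.eval_pow, map_mul, ← hge,
              ← evIP_spec ((l.erase x).prod) r, ← Polynomial.eval_mul]
            congr 1
            exact hS.symm
          have hFnR : (evIP Ft r) ^ n = g * evIP ((l.erase x).prod) r := by
            apply IsFractionRing.injective R K
            rw [map_pow]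
            exact hFn
          have : (evIP Ft r) ^ n ∈ IsLocalRing.maximalIdeal R := by
            rw [hFnR]
            exact Ideal.mul_mem_right _ _ hgM
          exact hprime.mem_of_pow_mem n this
        have hcondB : ∀ q : Polynomial K, q.Monic → Irreducible q →
            q ∣ (x : Polynomial K) → q ∣ F := by
          intro q hqm hqi hqx
          have hxdvd : (x : Polynomial K) ∣ F ^ n :=
            ⟨(((l.erase x).prod : intPoly R K) : Polynomial K), hS.symm⟩
          have hqprime : Prime q := UniqueFactorizationMonoid.irreducible_iff_prime.mp hqi
          exact hqprime.dvd_of_dvd_pow (hqx.trans hxdvd)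
        obtain ⟨k, hk⟩ := key x hcondA hcondB
        rcases k with - | k
        · rw [pow_zero] at hk
          exact absurd (associated_one_iff_isUnit.mp hk) (hl x hx).not_isUnit
        · rcases Nat.eq_zero_or_pos k with h | h
          · subst h
            rwa [pow_one] at hk
          · exfalso
            have hirr : Irreducible (Ft ^ (k + 1)) := hk.irreducible (hl x hx)
            rcases hirr.isUnit_or_isUnit (pow_succ' Ft k) with h' | h'
            · exact hFu h'
            · exact hFu ((isUnit_pow_iff (by omega)).mp h')
      refine ⟨?_, hmem⟩
      have h1 : Associated (Ft ^ n) (Ft ^ Multiset.card l) := by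
        rw [← hprod]
        exact prod_assoc_pow hmem
      exact (assoc_pow_cancel hFt0 hFu h1).symm
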